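/- Let $d, q \geq 2$ be integers with $\gcd(d, q) = 1$, and let $f = \mathrm{ord}_d(q)$ be the multiplicative order of $q$ modulo $d$. Suppose $v_2(d) \neq 1$. Then for every $v \mid d^\infty$ (i.e., every $v$ whose prime divisors all divide $d$), the multiplicative order of $q$ modulo $dv$ satisfies $\mathrm{ord}_{dv}(q) = \dfrac{f \cdot d v}{\gcd(q^f - 1, dv)}$. -/

import Mathlib

/-- Key LTE lemma: valuation of `Q^k - 1`. -/
lemma lte_key {p Q k : ℕ} (hp : p.Prime) (hQ : 2 ≤ Q) (hk : k ≠ 0)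
    (h1 : p ∣ Q - 1) (h4 : p = 2 → 4 ∣ Q - 1) :
    padicValNat p (Q ^ k - 1) = padicValNat p (Q - 1) + padicValNat p k := by
  haveI : Fact p.Prime := ⟨hp⟩
  have hpQ : ¬ p ∣ Q := by
    intro h
    have hp1 : p ∣ 1 := by
      have := Nat.dvd_sub h h1
      simpa [Nat.sub_sub_self (by omega : 1 ≤ Q)] using this
    have := Nat.dvd_one.mp hp1
    have := hp.one_lt
    omega
  rcases hp.eq_two_or_odd' with rfl | hodd
  · -- p = 2
    have h4' := h4 rfl
    have hQk : 1 < Q ^ k := by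
      calc 1 < Q := by omega
      _ ≤ Q ^ k := Nat.le_self_pow hk Q
    rw [← Nat.cast_inj (R := ℕ∞), Nat.cast_add]
    rw [padicValNat_eq_emultiplicity (by omega : Q ^ k - 1 ≠ 0),
      padicValNat_eq_emultiplicity (by omega : Q - 1 ≠ 0),
      padicValNat_eq_emultiplicity hk]
    rw [← Int.natCast_emultiplicity, ← Int.natCast_emultiplicity, ← Int.natCast_emultiplicity]
    have e1 : ((Q ^ k - 1 : ℕ) : ℤ) = (Q : ℤ) ^ k - 1 ^ k := by
      push_cast [Nat.cast_sub hQk.le]; ring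
    have e2 : ((Q - 1 : ℕ) : ℤ) = (Q : ℤ) - 1 := by
      push_cast [Nat.cast_sub (by omega : 1 ≤ Q)]; ring
    rw [e1, e2]
    have hxy : (4 : ℤ) ∣ (Q : ℤ) - 1 := by
      have : ((4 : ℕ) : ℤ) ∣ ((Q - 1 : ℕ) : ℤ) := Int.natCast_dvd_natCast.mpr h4'
      rwa [e2] at this
    have hx : ¬ (2 : ℤ) ∣ (Q : ℤ) := by
      intro h
      exact hpQ (by exact_mod_cast Int.natCast_dvd_natCast.mpr (by exact_mod_cast h))
    simpa using Int.two_pow_sub_pow' k hxy hx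
  · -- odd p
    have := padicValNat.pow_sub_pow (p := p) hodd (x := Q) (y := 1)
      (by omega : 1 < Q) (by simpa using h1) hpQ hk
    simpa using this

/-- dvd iff all padic valuations are ≤. -/
lemma dvd_iff_val {a b : ℕ} (ha : a ≠ 0) (hb : b ≠ 0) :
    a ∣ b ↔ ∀ p : ℕ, p.Prime → padicValNat p a ≤ padicValNat p b := by
  rw [← Nat.factorization_le_iff_dvd ha hb, Finsupp.le_def]
  constructor
  · intro h p hp
    have := h p
    rwa [Nat.factorization_def _ hp, Nat.factorization_def _ hp] at this
  · intro h p
    by_cases hp : p.Prime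
    · rw [Nat.factorization_def _ hp, Nat.factorization_def _ hp]; exact h p hp
    · simp [Nat.factorization_eq_zero_of_not_prime _ hp]

theorem stmt_4 (d q : ℕ) (hd : 2 ≤ d) (hq : 2 ≤ q) (hco : Nat.Coprime d q)
    (h2 : d.factorization 2 ≠ 1) (v : ℕ) (hv : 0 < v)
    (hvd : ∀ l : ℕ, l.Prime → l ∣ v → l ∣ d) :
    orderOf ((q : ZMod (d * v))) =
      orderOf ((q : ZMod d)) * d * v /
        Nat.gcd (q ^ orderOf ((q : ZMod d)) - 1) (d * v) := by
  set N := d * v with hN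
  have hN0 : N ≠ 0 := by positivity
  have hN2 : 2 ≤ N := le_trans hd (Nat.le_mul_of_pos_right d hv)
  -- coprimality
  have hcoqd : Nat.Coprime q d := hco.symm
  have hcoqv : Nat.Coprime q v := by
    by_contra h
    have hg1 : Nat.gcd q v ≠ 1 := h
    set p := (Nat.gcd q v).minFac with hp
    have hpp : p.Prime := Nat.minFac_prime hg1
    have hpq : p ∣ q := (Nat.minFac_dvd _).trans (Nat.gcd_dvd_left _ _)
    have hpv : p ∣ v := (Nat.minFac_dvd _).trans (Nat.gcd_dvd_right _ _)
    have hpd : p ∣ d := hvd p hpp hpv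
    have hdvd : p ∣ Nat.gcd d q := Nat.dvd_gcd hpd hpq
    rw [hco] at hdvd
    have := Nat.dvd_one.mp hdvd
    have := hpp.one_lt
    omega
  have hcoqN : Nat.Coprime q N := hcoqd.mul_right hcoqv
  -- positivity of orders via units
  have order_pos : ∀ n : ℕ, 2 ≤ n → (hc : Nat.Coprime q n) → 0 < orderOf ((q : ZMod n)) := by
    intro n hn hc
    haveI : NeZero n := ⟨by omega⟩
    have := ZMod.coe_unitOfCoprime q hc
    rw [← this, orderOf_units]
    exact orderOf_pos _
  set f := orderOf ((q : ZMod d)) with hf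
  have hf0 : 0 < f := order_pos d hd hcoqd
  set Q := q ^ f with hQdef
  have hQ2 : 2 ≤ Q := le_trans hq (Nat.le_self_pow hf0.ne' q)
  set a := Q - 1 with ha
  have ha0 : a ≠ 0 := by omega
  -- translation lemma: (q : ZMod n)^m = 1 ↔ n ∣ q^m - 1
  have pow_iff : ∀ n m : ℕ, 0 < n → (((q : ZMod n)) ^ m = 1 ↔ n ∣ q ^ m - 1) := by
    intro n m hn
    have h1 : (1 : ℕ) ≤ q ^ m := Nat.one_le_pow _ _ (by omega)
    rw [show ((q : ZMod n) ^ m) = ((q ^ m : ℕ) : ZMod n) by push_cast; ring,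
      show (1 : ZMod n) = ((1 : ℕ) : ZMod n) by simp,
      ZMod.natCast_eq_natCast_iff]
    constructor
    · intro h; exact (Nat.modEq_iff_dvd' h1).mp h.symm
    · intro h; exact ((Nat.modEq_iff_dvd' h1).mpr h).symm
  -- d ∣ a
  have hda : d ∣ a := by
    have := pow_orderOf_eq_one ((q : ZMod d))
    rw [← hf, pow_iff d f (by omega)] at this
    exact this
  -- key facts about primes dividing N
  have hprime_a : ∀ p : ℕ, p.Prime → p ∣ N → p ∣ a ∧ (p = 2 → 4 ∣ a) := by
    intro p hp hpN
    have hpd : p ∣ d := by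
      rcases (Nat.Prime.dvd_mul hp).mp hpN with h | h
      · exact h
      · exact hvd p hp h
    refine ⟨hpd.trans hda, ?_⟩
    rintro rfl
    have h1 : 1 ≤ d.factorization 2 := by
      rw [Nat.factorization_def _ Nat.prime_two]
      exact one_le_padicValNat_of_dvd (by omega) hpd
    have h4d : (4 : ℕ) ∣ d := by
      have : 2 ≤ d.factorization 2 := by omega
      exact (Nat.Prime.pow_dvd_iff_le_factorization Nat.prime_two (by omega)).mpr this
    exact h4d.trans hda
  set g := Nat.gcd a N with hg
  have hg0 : g ≠ 0 := Nat.gcd_ne_zero_right hN0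
  have hgN : g ∣ N := Nat.gcd_dvd_right _ _
  set k := N / g with hk
  have hk0 : k ≠ 0 := Nat.div_ne_zero_iff_of_dvd hgN |>.mpr ⟨hN0, hg0⟩
  have hkN : k ∣ N := Nat.div_dvd_of_dvd hgN
  -- valuation of k
  have val_k : ∀ p : ℕ, p.Prime →
      padicValNat p k = padicValNat p N - min (padicValNat p a) (padicValNat p N) := by
    intro p hp
    have h1 : k.factorization = N.factorization - g.factorization := Nat.factorization_div hgN
    have h2' : g.factorization = a.factorization ⊓ N.factorization :=
      Nat.factorization_gcd ha0 hN0
    have := congrArg (fun s => s p) h1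
    simp only [h2', Finsupp.tsub_apply, Finsupp.inf_apply] at this
    rw [Nat.factorization_def _ hp, Nat.factorization_def _ hp, Nat.factorization_def _ hp]
      at this
    exact this
  -- Step A: (q : ZMod N)^(f*k) = 1
  have hQk2 : 2 ≤ Q ^ k := le_trans hQ2 (Nat.le_self_pow hk0 Q)
  have hQkne : Q ^ k - 1 ≠ 0 := by omega
  have stepA : ((q : ZMod N)) ^ (f * k) = 1 := by
    rw [pow_iff N (f * k) (by omega), pow_mul]
    rw [dvd_iff_val hN0 hQkne]
    intro p hp
    by_cases hpN : p ∣ N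
    · obtain ⟨hpa, hp4⟩ := hprime_a p hp hpN
      rw [lte_key hp hQ2 hk0 hpa hp4, val_k p hp]
      have : padicValNat p a = padicValNat p (Q - 1) := rfl
      omega
    · rw [padicValNat.eq_zero_of_not_dvd hpN]; omega
  -- Step B: f * k ∣ orderOf (q : ZMod N)
  set m := orderOf ((q : ZMod N)) with hm
  have hm0 : 0 < m := order_pos N hN2 hcoqN
  have hfm : f ∣ m := by
    have h1 : ((q : ZMod N)) ^ m = 1 := pow_orderOf_eq_one _
    have h2' : ((q : ZMod d)) ^ m = 1 := by
      have hdN : d ∣ N := dvd_mul_right d v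
      have := congrArg (ZMod.castHom hdN (ZMod d)) h1
      rwa [map_pow, map_natCast, map_one] at this
    exact orderOf_dvd_iff_pow_eq_one.mpr h2'
  obtain ⟨k', hk'⟩ := hfm
  have hk'0 : k' ≠ 0 := by rintro rfl; omega
  have hNdvd : N ∣ Q ^ k' - 1 := by
    have h1 : ((q : ZMod N)) ^ m = 1 := pow_orderOf_eq_one _
    rw [hk', pow_iff N (f * k') (by omega), pow_mul] at h1
    exact h1
  have hQk'2 : 2 ≤ Q ^ k' := le_trans hQ2 (Nat.le_self_pow hk'0 Q)
  have hQk'ne : Q ^ k' - 1 ≠ 0 := by omega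
  have hkk' : k ∣ k' := by
    rw [dvd_iff_val hk0 hk'0]
    intro p hp
    by_cases hpN : p ∣ N
    · obtain ⟨hpa, hp4⟩ := hprime_a p hp hpN
      have hval := (dvd_iff_val hN0 hQk'ne).mp hNdvd p hp
      rw [lte_key hp hQ2 hk'0 hpa hp4] at hval
      rw [val_k p hp]
      have : padicValNat p a = padicValNat p (Q - 1) := rfl
      omega
    · have : ¬ p ∣ k := fun h => hpN (h.trans hkN)
      rw [padicValNat.eq_zero_of_not_dvd this]; omega
  have hfkm : f * k ∣ m := hk' ▸ mul_dvd_mul_left f hkk'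
  have hmfk : m ∣ f * k := orderOf_dvd_iff_pow_eq_one.mpr stepA
  have hmain : m = f * k := Nat.dvd_antisymm hmfk hfkm
  rw [hmain, hk, mul_assoc, Nat.mul_div_assoc f hgN]
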